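/- Let X be a compact Hausdorff space, Y a metric space, and f ∈ B_1(X,Y) a Baire-one map. Suppose f factors as f = g ∘ φ where φ : X → Z is continuous, Z is a metrizable compact space, and g ∈ B_1(Z,Y). Then f is functionally countably fragmented; in particular (granting the factorization, which always exists), every Baire-one map from a compact Hausdorff space to a metric space is functionally countably fragmented. -/

import Mathlib

open Set Filter Topology

/-- A map is Baire-one if it is a pointwise limit of continuous maps. -/
def BaireOne {X Y : Type*} [TopologicalSpace X] [TopologicalSpace Y] (f : X → Y) : Prop :=
  ∃ g : ℕ → X → Y, (∀ n, Continuous (g n)) ∧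
    ∀ x, Filter.Tendsto (fun n => g n x) Filter.atTop (nhds (f x))

/-- A regular transfinite sequence of open sets in `X`. -/
def RegularSeq {X : Type*} [TopologicalSpace X] (α : Ordinal.{0}) (U : Ordinal.{0} → Set X) : Prop :=
  (∀ ξ, ξ ≤ α → IsOpen (U ξ)) ∧ U 0 = ∅ ∧ U α = Set.univ ∧
  (∀ ξ η, ξ ≤ η → η ≤ α → U ξ ⊆ U η) ∧
  (∀ γ, γ ≤ α → Order.IsSuccLimit γ → U γ = ⋃ ξ < γ, U ξ)

/-- A functionally open set: the preimage of `(0,1]` under a continuous map to `[0,1]`. -/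
def FunctionallyOpen {X : Type*} [TopologicalSpace X] (U : Set X) : Prop :=
  ∃ φ : X → ℝ, Continuous φ ∧ (∀ x, φ x ∈ Set.Icc (0:ℝ) 1) ∧ U = φ ⁻¹' Set.Ioc (0:ℝ) 1

/-- A map is functionally countably fragmented. -/
def FunctCountFrag {X Y : Type*} [TopologicalSpace X] [MetricSpace Y] (f : X → Y) : Prop :=
  ∀ ε : ℝ, 0 < ε → ∃ (α : Ordinal.{0}) (U : Ordinal.{0} → Set X),
    α.card ≤ Cardinal.aleph0 ∧ RegularSeq α U ∧ (∀ ξ, ξ ≤ α → FunctionallyOpen (U ξ)) ∧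
    ∀ ξ, ξ < α → Metric.diam (f '' (U (ξ + 1) \ U ξ)) < ε

/-- In a metric space, every open set is functionally open. -/
lemma functionallyOpen_of_isOpen {Z : Type*} [MetricSpace Z] {V : Set Z} (hV : IsOpen V) :
    FunctionallyOpen V := by
  rcases eq_or_ne V univ with rfl | hne
  · refine ⟨fun _ => 1, continuous_const, fun x => ⟨zero_le_one, le_refl 1⟩, ?_⟩
    ext x; simp
  · have hcne : Vᶜ.Nonempty := nonempty_compl.2 hne
    refine ⟨fun x => min 1 (Metric.infDist x Vᶜ),
      continuous_const.min (Metric.continuous_infDist_pt _),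
      fun x => ⟨le_min zero_le_one Metric.infDist_nonneg, min_le_left _ _⟩, ?_⟩
    ext x
    simp only [mem_preimage, mem_Ioc, lt_min_iff]
    constructor
    · intro hx
      refine ⟨⟨one_pos, ?_⟩, min_le_left _ _⟩
      exact (hV.isClosed_compl.notMem_iff_infDist_pos hcne).1 (by simpa using hx)
    · rintro ⟨⟨-, h⟩, -⟩
      by_contra hxV
      rw [Metric.infDist_zero_of_mem (by simpa using hxV)] at h
      exact lt_irrefl 0 h

/-- The preimage of a functionally open set under a continuous map is functionally open. -/
lemma functionallyOpen_preimage {X Z : Type*} [TopologicalSpace X] [TopologicalSpace Z]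
    {φ : X → Z} (hφ : Continuous φ) {V : Set Z} (hV : FunctionallyOpen V) :
    FunctionallyOpen (φ ⁻¹' V) := by
  obtain ⟨ψ, hc, hb, hEq⟩ := hV
  exact ⟨ψ ∘ φ, hc.comp hφ, fun x => hb (φ x), by rw [hEq]; rfl⟩

/-- Fragmentation: a Baire-one map on a metric space has, on every nonempty compact closed
subset, a relatively open nonempty piece with small image. -/
lemma frag_lemma {Z Y : Type*} [MetricSpace Z] [MetricSpace Y] {g : Z → Y}
    (hg : BaireOne g) {F : Set Z} (hFc : IsClosed F) (hFcpt : IsCompact F) (hne : F.Nonempty)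
    {δ : ℝ} (hδ : 0 < δ) :
    ∃ V : Set Z, IsOpen V ∧ (V ∩ F).Nonempty ∧
      EMetric.diam (g '' (V ∩ F)) ≤ ENNReal.ofReal δ := by
  obtain ⟨G, hGc, hGlim⟩ := hg
  set η := δ / 4 with hη
  have hηpos : 0 < η := by positivity
  haveI : CompactSpace F := isCompact_iff_compactSpace.1 hFcpt
  haveI : Nonempty F := hne.to_subtype
  set A : ℕ → Set F := fun n =>
    {x | ∀ m k, n ≤ m → n ≤ k → dist (G m x.1) (G k x.1) ≤ η} with hA
  have hAc : ∀ n, IsClosed (A n) := by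
    intro n
    have : A n = ⋂ m, ⋂ k, ⋂ (_ : n ≤ m), ⋂ (_ : n ≤ k),
        {x : F | dist (G m x.1) (G k x.1) ≤ η} := by
      ext x
      simp only [hA, mem_setOf_eq, mem_iInter]
    rw [this]
    exact isClosed_iInter fun m => isClosed_iInter fun k => isClosed_iInter fun _ =>
      isClosed_iInter fun _ =>
        isClosed_le (Continuous.dist ((hGc m).comp continuous_subtype_val)
          ((hGc k).comp continuous_subtype_val)) continuous_const
  have hAcover : ⋃ n, A n = univ := by
    ext x
    simp only [mem_iUnion, mem_univ, iff_true]
    obtain ⟨N, hN⟩ := (Metric.tendsto_atTop.1 (hGlim x.1)) (η / 2) (by positivity)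
    refine ⟨N, fun m k hm hk => ?_⟩
    calc dist (G m x.1) (G k x.1)
        ≤ dist (G m x.1) (g x.1) + dist (G k x.1) (g x.1) := dist_triangle_right _ _ _
      _ ≤ η / 2 + η / 2 := add_le_add (hN m hm).le (hN k hk).le
      _ = η := by ring
  obtain ⟨n, x₀, hx₀⟩ := nonempty_interior_of_iUnion_of_closed hAc hAcover
  have hlim : ∀ x ∈ A n, dist (G n x.1) (g x.1) ≤ η := by
    intro x hx
    have ht : Tendsto (fun m => dist (G n x.1) (G m x.1)) atTop
        (nhds (dist (G n x.1) (g x.1))) := tendsto_const_nhds.dist (hGlim x.1)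
    exact le_of_tendsto ht (eventually_atTop.2 ⟨n, fun m hm => hx n m le_rfl hm⟩)
  set W : Set F := interior (A n) ∩ (fun x : F => G n x.1) ⁻¹' Metric.ball (G n x₀.1) η with hW
  have hWopen : IsOpen W := isOpen_interior.inter
    (((hGc n).comp continuous_subtype_val).isOpen_preimage _ Metric.isOpen_ball)
  have hx₀W : x₀ ∈ W := ⟨hx₀, by simp [Metric.mem_ball, hηpos]⟩
  have hpair : ∀ x ∈ W, ∀ y ∈ W, dist (g x.1) (g y.1) ≤ δ := by
    intro x hx y hy
    have hxA : x ∈ A n := interior_subset hx.1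
    have hyA : y ∈ A n := interior_subset hy.1
    have hxb : dist (G n x.1) (G n x₀.1) < η := hx.2
    have hyb : dist (G n y.1) (G n x₀.1) < η := hy.2
    calc dist (g x.1) (g y.1)
        ≤ dist (g x.1) (G n x.1) + dist (G n x.1) (G n y.1) + dist (G n y.1) (g y.1) :=
          dist_triangle4 _ _ _ _
      _ ≤ η + (dist (G n x.1) (G n x₀.1) + dist (G n y.1) (G n x₀.1)) + η := by
          gcongr
          · rw [dist_comm]; exact hlim x hxA
          · exact dist_triangle_right _ _ _
          · exact hlim y hyA
      _ ≤ η + (η + η) + η := by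
          have := hxb.le; have := hyb.le; gcongr
      _ = δ := by rw [hη]; ring
  obtain ⟨V, hVopen, hVW⟩ := isOpen_induced_iff.1 hWopen
  have himg : V ∩ F = F ∩ V := inter_comm _ _
  have hWimg : (Subtype.val : F → Z) '' W = F ∩ V := by
    rw [← hVW]; exact Subtype.image_preimage_coe F V
  refine ⟨V, hVopen, ?_, ?_⟩
  · refine ⟨x₀.1, ?_, x₀.2⟩
    have : x₀ ∈ (Subtype.val : F → Z) ⁻¹' V := by rw [hVW]; exact hx₀W
    exact this
  · rw [himg, ← hWimg]
    apply EMetric.diam_le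
    rintro a ⟨_, ⟨x, hxW, rfl⟩, rfl⟩ b ⟨_, ⟨y, hyW, rfl⟩, rfl⟩
    rw [edist_le_ofReal hδ.le]
    exact hpair x hxW y hyW

/-- The key construction: a countable regular sequence of open sets along which a Baire-one
map on a compact metric space has small oscillation. -/
lemma exists_reg_seq {Z Y : Type*} [MetricSpace Z] [CompactSpace Z] [MetricSpace Y]
    {g : Z → Y} (hg : BaireOne g) {ε : ℝ} (hε : 0 < ε) :
    ∃ (α : Ordinal.{0}) (U : Ordinal.{0} → Set Z),
      α.card ≤ Cardinal.aleph0 ∧ RegularSeq α U ∧ (∀ ξ, IsOpen (U ξ)) ∧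
      ∀ ξ, EMetric.diam (g '' (U (ξ + 1) \ U ξ)) ≤ ENNReal.ofReal (ε / 2) := by
  classical
  have hδ : (0 : ℝ) < ε / 2 := by positivity
  -- the "successor" operation
  set T : Set Z → Set Z := fun S =>
    if h : IsOpen S ∧ S ≠ univ then
      S ∪ (frag_lemma hg (isClosed_compl_iff.2 h.1) (isClosed_compl_iff.2 h.1).isCompact
        (nonempty_compl.2 h.2) hδ).choose
    else univ with hT
  have hT1 : ∀ S, S ⊆ T S := by
    intro S
    by_cases h : IsOpen S ∧ S ≠ univ
    · rw [hT]; simp only [dif_pos h]; exact subset_union_left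
    · rw [hT]; simp only [dif_neg h]; exact subset_univ _
  have hT2 : ∀ S, IsOpen S → IsOpen (T S) := by
    intro S hS
    by_cases h : IsOpen S ∧ S ≠ univ
    · rw [hT]; simp only [dif_pos h]
      exact hS.union (frag_lemma hg (isClosed_compl_iff.2 h.1) (isClosed_compl_iff.2 h.1).isCompact
        (nonempty_compl.2 h.2) hδ).choose_spec.1
    · rw [hT]; simp only [dif_neg h]; exact isOpen_univ
  have hTdiff : ∀ S (h : IsOpen S ∧ S ≠ univ),
      T S \ S = (frag_lemma hg (isClosed_compl_iff.2 h.1) (isClosed_compl_iff.2 h.1).isCompact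
        (nonempty_compl.2 h.2) hδ).choose ∩ Sᶜ := by
    intro S h
    rw [hT]; simp only [dif_pos h]
    rw [union_diff_left, diff_eq]
  have hT3 : ∀ S, IsOpen S → S ≠ univ → (T S \ S).Nonempty := by
    intro S hS hSu
    rw [hTdiff S ⟨hS, hSu⟩]
    exact (frag_lemma hg (isClosed_compl_iff.2 hS) (isClosed_compl_iff.2 hS).isCompact
      (nonempty_compl.2 hSu) hδ).choose_spec.2.1
  have hT4 : ∀ S, IsOpen S → EMetric.diam (g '' (T S \ S)) ≤ ENNReal.ofReal (ε / 2) := by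
    intro S hS
    by_cases hSu : S = univ
    · subst hSu
      have : T univ \ univ = (∅ : Set Z) := by simp
      rw [this]; simp; exact (EMetric.diam_subsingleton subsingleton_empty).trans_le zero_le
    · rw [hTdiff S ⟨hS, hSu⟩]
      exact (frag_lemma hg (isClosed_compl_iff.2 hS) (isClosed_compl_iff.2 hS).isCompact
        (nonempty_compl.2 hSu) hδ).choose_spec.2.2
  -- the transfinite sequence
  set U : Ordinal.{0} → Set Z := fun o =>
    Ordinal.limitRecOn o ∅ (fun _ S => T S) (fun o _ ih => ⋃ ξ, ⋃ h : ξ < o, ih ξ h) with hU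
  have hU0 : U 0 = ∅ := Ordinal.limitRecOn_zero _ _ _
  have hUsucc : ∀ o, U (o + 1) = T (U o) := by
    intro o
    rw [hU, Ordinal.add_one_eq_succ]
    exact Ordinal.limitRecOn_succ _ _ _ _
  have hUlim : ∀ o, Order.IsSuccLimit o → U o = ⋃ ξ, ⋃ _ : ξ < o, U ξ := by
    intro o ho
    rw [hU]
    exact Ordinal.limitRecOn_limit _ _ _ _ ho
  have hopen : ∀ o, IsOpen (U o) := by
    intro o
    induction o using Ordinal.induction with
    | _ o ih =>
      rcases Ordinal.zero_or_succ_or_isSuccLimit o with rfl | ⟨p, rfl⟩ | hlim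
      · rw [hU0]; exact isOpen_empty
      · rw [← Ordinal.add_one_eq_succ, hUsucc]
        exact hT2 _ (ih p (by rw [← Ordinal.add_one_eq_succ]; exact Order.lt_succ p))
      · rw [hUlim o hlim]
        exact isOpen_iUnion fun ξ => isOpen_iUnion fun h => ih ξ h
  have hmono : ∀ η ξ, ξ ≤ η → U ξ ⊆ U η := by
    intro η
    induction η using Ordinal.induction with
    | _ η ih =>
      intro ξ hle
      rcases eq_or_lt_of_le hle with rfl | hlt
      · exact subset_rfl
      · rcases Ordinal.zero_or_succ_or_isSuccLimit η with rfl | ⟨p, rfl⟩ | hlim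
        · exact absurd hlt (not_lt_zero (a := ξ))
        · have hp : ξ ≤ p := Order.lt_succ_iff.1 hlt
          have h1 : U ξ ⊆ U p := ih p (Order.lt_succ p) ξ hp
          have h2 : U p ⊆ U (Order.succ p) := by
            rw [← Ordinal.add_one_eq_succ, hUsucc]; exact hT1 _
          exact h1.trans h2
        · rw [hUlim η hlim]
          exact subset_iUnion_of_subset ξ (subset_iUnion_of_subset hlt subset_rfl)
  have hdiam : ∀ ξ, EMetric.diam (g '' (U (ξ + 1) \ U ξ)) ≤ ENNReal.ofReal (ε / 2) := by
    intro ξ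
    rw [hUsucc]
    exact hT4 _ (hopen ξ)
  -- termination before ω₁
  set ω₁ : Ordinal.{0} := (Cardinal.aleph 1).ord with hω₁
  have hexists : ∃ α, α < ω₁ ∧ U α = univ := by
    by_contra hcon
    push_neg at hcon
    have key : ∀ ξ : Ordinal.{0}, ξ < ω₁ → (U (ξ + 1) \ U ξ).Nonempty := by
      intro ξ hξ
      rw [hUsucc]
      exact hT3 _ (hopen ξ) (hcon ξ hξ)
    set B := TopologicalSpace.countableBasis Z with hB
    have hb : ∀ p : (Iio ω₁ : Set Ordinal.{0}), ∃ b ∈ B,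
        (b ∩ (U (p.1 + 1) \ U p.1)).Nonempty ∧ b ⊆ U (p.1 + 1) := by
      rintro ⟨ξ, hξ⟩
      obtain ⟨x, hx⟩ := key ξ hξ
      obtain ⟨b, hbB, hxb, hbsub⟩ :=
        (TopologicalSpace.isBasis_countableBasis Z).exists_subset_of_mem_open hx.1 (hopen (ξ + 1))
      exact ⟨b, hbB, ⟨x, hxb, hx⟩, hbsub⟩
    choose b hbB hbne hbsub using hb
    haveI : Countable B := (TopologicalSpace.countable_countableBasis Z).to_subtype
    have hinj : Function.Injective (fun p : (Iio ω₁ : Set Ordinal.{0}) => (⟨b p, hbB p⟩ : B)) := by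
      intro p q hpq
      simp only [Subtype.mk_eq_mk] at hpq
      by_contra hne'
      have hlt : p.1 < q.1 ∨ q.1 < p.1 := by
        rcases lt_trichotomy p.1 q.1 with h | h | h
        · exact Or.inl h
        · exact absurd (Subtype.ext h) hne'
        · exact Or.inr h
      rcases hlt with h | h
      · obtain ⟨x, hxb, hxU⟩ := hbne q
        have h1 : p.1 + 1 ≤ q.1 := by
          rw [Ordinal.add_one_eq_succ]; exact Order.succ_le_of_lt h
        have : x ∈ U q.1 := hmono q.1 (p.1 + 1) h1 (hbsub p (hpq ▸ hxb))
        exact hxU.2 this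
      · obtain ⟨x, hxb, hxU⟩ := hbne p
        have h1 : q.1 + 1 ≤ p.1 := by
          rw [Ordinal.add_one_eq_succ]; exact Order.succ_le_of_lt h
        have : x ∈ U p.1 := hmono p.1 (q.1 + 1) h1 (hbsub q (hpq ▸ hxb))
        exact hxU.2 this
    haveI : Countable (Iio ω₁ : Set Ordinal.{0}) := hinj.countable
    have hcard : Cardinal.mk (Iio ω₁ : Set Ordinal.{0}) ≤ Cardinal.aleph0 := Cardinal.mk_le_aleph0
    rw [Ordinal.mk_Iio_ordinal, hω₁, Cardinal.card_ord] at hcard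
    rw [Cardinal.lift_le_aleph0] at hcard
    exact absurd hcard (Cardinal.aleph0_lt_aleph_one).not_ge
  obtain ⟨α, hαlt, hαuniv⟩ := hexists
  have hαcard : α.card ≤ Cardinal.aleph0 := by
    have := Cardinal.lt_ord.1 hαlt
    rwa [← Cardinal.succ_aleph0, Order.lt_succ_iff] at this
  refine ⟨α, U, hαcard, ⟨fun ξ _ => hopen ξ, hU0, hαuniv, fun ξ η h _ => hmono η ξ h,
    fun γ _ hγ => hUlim γ hγ⟩, hopen, hdiam⟩

theorem stmt13 {X Z Y : Type*} [TopologicalSpace X] [CompactSpace X] [T2Space X]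
    [TopologicalSpace Z] [CompactSpace Z] [TopologicalSpace.MetrizableSpace Z]
    [MetricSpace Y] (f : X → Y) (hf : BaireOne f)
    (φ : X → Z) (hφ : Continuous φ) (g : Z → Y) (hg : BaireOne g)
    (hfac : f = g ∘ φ) :
    FunctCountFrag f := by
  letI : MetricSpace Z := TopologicalSpace.metrizableSpaceMetric Z
  intro ε hε
  obtain ⟨α, U, hcard, ⟨hropen, hr0, hrα, hrmono, hrlim⟩, hopen, hdiam⟩ :=
    exists_reg_seq hg hε
  refine ⟨α, fun ξ => φ ⁻¹' (U ξ), hcard, ?_, ?_, ?_⟩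
  · refine ⟨fun ξ _ => (hopen ξ).preimage hφ, by show φ ⁻¹' U 0 = ∅; rw [hr0]; exact preimage_empty,
      by show φ ⁻¹' U α = univ; rw [hrα]; exact preimage_univ, fun ξ η h hη => preimage_mono (hrmono ξ η h hη), ?_⟩
    intro γ hγ hlim
    show φ ⁻¹' U γ = ⋃ ξ, ⋃ _ : ξ < γ, φ ⁻¹' U ξ
    rw [hrlim γ hγ hlim]
    simp [preimage_iUnion]
  · intro ξ _
    exact functionallyOpen_preimage hφ (functionallyOpen_of_isOpen (hopen ξ))
  · intro ξ _
    have h1 : f '' (φ ⁻¹' U (ξ + 1) \ φ ⁻¹' U ξ) ⊆ g '' (U (ξ + 1) \ U ξ) := by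
      rintro _ ⟨x, hx, rfl⟩
      exact ⟨φ x, ⟨hx.1, hx.2⟩, by rw [hfac]; rfl⟩
    have h2 : EMetric.diam (f '' (φ ⁻¹' U (ξ + 1) \ φ ⁻¹' U ξ)) ≤ ENNReal.ofReal (ε / 2) :=
      le_trans (EMetric.diam_mono h1) (hdiam ξ)
    have h3 : Metric.diam (f '' (φ ⁻¹' U (ξ + 1) \ φ ⁻¹' U ξ)) ≤ ε / 2 :=
      ENNReal.toReal_le_of_le_ofReal (by positivity) h2
    linarith
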